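/- Let S be a dense subsemigroup of (T,+), e ∈ E(T), (X,⟨T_s⟩_{s∈S}) a dynamical system, L a minimal left ideal of e*_S, and x ∈ X. If there exists u ∈ L with T_u(x) = x, then there exists an idempotent u' ∈ L with T_u'(x) = x. -/
import Mathlib


open Filter Topology Set

attribute [local instance] Ultrafilter.add Ultrafilter.addSemigroup

universe u

section NearIdem

variable {T : Type u} [AddSemigroup T] [TopologicalSpace T]

/-- The set of ultrafilters on `S` converging to `e` (denoted `e*_S`). -/
def EStar (S : AddSubsemigroup T) (e : T) : Set (Ultrafilter S) :=
  {p | ∀ U ∈ nhds e, {s : S | (s : T) ∈ U} ∈ p}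

/-- `B ⊆ S` is syndetic near `e`. -/
def SyndeticNear (S : AddSubsemigroup T) (e : T) (B : Set S) : Prop :=
  ∀ U ∈ nhds e, ∃ F : Finset S, (∀ t ∈ F, (t : T) ∈ U) ∧
    ∃ V ∈ nhds e, ∀ s : S, (s : T) ∈ V → ∃ t ∈ F, t + s ∈ B

/-- `A ⊆ S` is topologically piecewise syndetic near `e`. -/
def TopPWSNear (S : AddSubsemigroup T) (e : T) (A : Set S) : Prop :=
  ∀ U ∈ nhds e, ∃ F : Finset S, (∀ t ∈ F, (t : T) ∈ U) ∧
    ∃ V ∈ nhds e, ∀ G : Finset S, ∀ O ∈ nhds e, ∃ x : S, (x : T) ∈ O ∧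
      ∀ g ∈ G, (g : T) ∈ V → ∃ t ∈ F, t + (g + x) ∈ A

/-- Left ideal of a subsemigroup `E` of `βM`. -/
def IsLeftIdealIn {M : Type*} [AddSemigroup M] (E L : Set (Ultrafilter M)) : Prop :=
  L.Nonempty ∧ L ⊆ E ∧ ∀ p ∈ E, ∀ q ∈ L, p + q ∈ L

/-- Minimal left ideal of `E`. -/
def IsMinimalLeftIdealIn {M : Type*} [AddSemigroup M] (E L : Set (Ultrafilter M)) : Prop :=
  IsLeftIdealIn E L ∧ ∀ L', IsLeftIdealIn E L' → L' ⊆ L → L' = L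

/-- The smallest ideal `K(E)`, the union of all minimal left ideals of `E`. -/
def SmallestIdeal {M : Type*} [AddSemigroup M] (E : Set (Ultrafilter M)) : Set (Ultrafilter M) :=
  {p | ∃ L, IsMinimalLeftIdealIn E L ∧ p ∈ L}

/-- `T_p(x) = p`-`lim_(s ∈ S) T_s(x)`. -/
noncomputable def TP {M : Type*} {X : Type*} [TopologicalSpace X]
    (Ts : M → X → X) (p : Ultrafilter M) (x : X) : X :=
  (p.map fun s => Ts s x).lim

/-- `x` is a uniformly recurrent point near `e`. -/
def UnifRecNear (S : AddSubsemigroup T) (e : T) {X : Type*} [TopologicalSpace X]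
    (Ts : S → X → X) (x : X) : Prop :=
  ∀ W ∈ nhds x, SyndeticNear S e {s : S | Ts s x ∈ W}

/-- `x` and `y` are proximal near `e` (characterized via `e*_S`). -/
noncomputable def ProximalNear (S : AddSubsemigroup T) (e : T) {X : Type*} [TopologicalSpace X]
    (Ts : S → X → X) (x y : X) : Prop :=
  ∃ p ∈ EStar S e, TP Ts p x = TP Ts p y

variable [T2Space T]

lemma tp_tendsto' {M : Type*} {X : Type*} [TopologicalSpace X] [CompactSpace X]
    (Ts : M → X → X) (p : Ultrafilter M) (x : X) :
    Filter.Tendsto (fun s => Ts s x) p (𝓝 (TP Ts p x)) :=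
  (p.map fun s => Ts s x).le_nhds_lim

lemma tp_eq' {M : Type*} {X : Type*} [TopologicalSpace X] [CompactSpace X] [T2Space X]
    {Ts : M → X → X} {p : Ultrafilter M} {x y : X}
    (h : Filter.Tendsto (fun s => Ts s x) p (𝓝 y)) : TP Ts p x = y :=
  tendsto_nhds_unique (tp_tendsto' Ts p x) h

lemma tp_add' {M : Type*} [AddSemigroup M] {X : Type*} [TopologicalSpace X] [CompactSpace X]
    [T2Space X] (Ts : M → X → X) (hTcont : ∀ s, Continuous (Ts s))
    (hTact : ∀ s t z, Ts s (Ts t z) = Ts (s + t) z) (p q : Ultrafilter M) (x : X) :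
    TP Ts (p + q) x = TP Ts p (TP Ts q x) := by
  apply tp_eq'
  rw [tendsto_nhds]
  intro W hWopen hW
  have key : ∀ᶠ a in (p : Filter M), ∀ᶠ b in (q : Filter M), Ts (a + b) x ∈ W := by
    have hp : ∀ᶠ a in (p : Filter M), Ts a (TP Ts q x) ∈ W :=
      (tp_tendsto' Ts p (TP Ts q x)) (hWopen.mem_nhds hW)
    filter_upwards [hp] with a ha
    have h2 : Filter.Tendsto (fun b => Ts (a + b) x) q (𝓝 (Ts a (TP Ts q x))) := by
      have := ((hTcont a).tendsto (TP Ts q x)).comp (tp_tendsto' Ts q x)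
      simpa only [Function.comp_def, hTact] using this
    exact h2 (hWopen.mem_nhds ha)
  exact (Ultrafilter.eventually_add p q _).mpr key

lemma estar_add' {S : AddSubsemigroup T} {e : T} (he : e + e = e)
    (hl : ∀ t : T, Continuous fun x : T => t + x)
    (hr : ∀ t : T, Continuous fun x : T => x + t)
    {p q : Ultrafilter S} (hp : p ∈ EStar S e) (hq : q ∈ EStar S e) :
    p + q ∈ EStar S e := by
  intro U hU
  have hIU : e ∈ {t : T | t + e ∈ interior U} :=
    by simpa [he] using mem_interior_iff_mem_nhds.mpr hU
  have h1 : {t : T | t + e ∈ interior U} ∈ nhds e :=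
    (((hr e).isOpen_preimage _ isOpen_interior).mem_nhds hIU)
  have key : ∀ᶠ a in (p : Filter S), ∀ᶠ b in (q : Filter S), ((a + b : S) : T) ∈ U := by
    filter_upwards [hp _ h1] with a ha
    have h2 : {t : T | (a : T) + t ∈ interior U} ∈ nhds e :=
      (((hl (a : T)).isOpen_preimage _ isOpen_interior).mem_nhds ha)
    filter_upwards [hq _ h2] with b hb
    exact interior_subset hb
  exact (Ultrafilter.eventually_add p q _).mpr key

lemma estar_closed' (S : AddSubsemigroup T) (e : T) : IsClosed (EStar S e) := by
  have : EStar S e = ⋂ U ∈ nhds e, {p : Ultrafilter S | {s : S | (s : T) ∈ U} ∈ p} := by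
    ext p; simp [EStar]
  rw [this]
  exact isClosed_biInter fun U _ => ultrafilter_isClosed_basic _

/-- If some `u` in a minimal left ideal `L` of `e*_S` fixes `x`, then some
idempotent of `L` fixes `x`. -/
theorem exists_idempotent_fixing (S : AddSubsemigroup T) (hdense : Dense (S : Set T))
    (hl : ∀ t : T, Continuous fun x : T => t + x)
    (hr : ∀ t : T, Continuous fun x : T => x + t)
    (e : T) (he : e + e = e)
    {X : Type u} [TopologicalSpace X] [CompactSpace X] [T2Space X]
    (Ts : S → X → X) (hTcont : ∀ s, Continuous (Ts s))
    (hTact : ∀ s t z, Ts s (Ts t z) = Ts (s + t) z) (L : Set (Ultrafilter S))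
    (hL : IsMinimalLeftIdealIn (EStar S e) L) (x : X)
    (hfix : ∃ u ∈ L, TP Ts u x = x) :
    ∃ u ∈ L, u + u = u ∧ TP Ts u x = x := by
  obtain ⟨u0, hu0L, hu0fix⟩ := hfix
  obtain ⟨⟨w, hwL⟩, hLE, hLideal⟩ := hL.1
  -- L is compact: it equals the image of the compact set `EStar S e` under `(· + u0)`.
  have hEcompact : IsCompact (EStar S e) := (estar_closed' S e).isCompact
  have himg : (fun p => p + u0) '' EStar S e = L := by
    apply hL.2
    · refine ⟨⟨w + u0, ⟨w, hLE hwL, rfl⟩⟩, ?_, ?_⟩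
      · rintro _ ⟨p, hp, rfl⟩
        exact hLE (hLideal p hp u0 hu0L)
      · rintro r hrE _ ⟨p, hp, rfl⟩
        exact ⟨r + p, estar_add' he hl hr hrE hp, show (r + p) + u0 = r + (p + u0) from add_assoc r p u0⟩
    · rintro _ ⟨p, hp, rfl⟩
      exact hLideal p hp u0 hu0L
  have hLcompact : IsCompact L := by
    rw [← himg]
    exact hEcompact.image (Ultrafilter.continuous_add_left u0)
  -- TP agrees with the Stone–Čech extension, hence `p ↦ TP Ts p x` is continuous.
  have hTPext : ∀ p : Ultrafilter S, TP Ts p x = Ultrafilter.extend (fun s => Ts s x) p := by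
    intro p
    exact (ultrafilter_extend_eq_iff.mpr (tp_tendsto' Ts p x)).symm
  set A : Set (Ultrafilter S) := L ∩ {p | TP Ts p x = x} with hA
  have hAclosed : IsClosed A := by
    apply hLcompact.isClosed.inter
    have : {p : Ultrafilter S | TP Ts p x = x}
        = (Ultrafilter.extend (fun s => Ts s x)) ⁻¹' {x} := by
      ext p; simp [hTPext p]
    rw [this]
    exact (isClosed_singleton).preimage (continuous_ultrafilter_extend _)
  have hAcompact : IsCompact A := hLcompact.of_isClosed_subset hAclosed inter_subset_left
  have hAne : A.Nonempty := ⟨u0, hu0L, hu0fix⟩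
  have hAadd : ∀ p ∈ A, ∀ q ∈ A, p + q ∈ A := by
    rintro p ⟨hpL, hpfix⟩ q ⟨hqL, hqfix⟩
    refine ⟨hLideal p (hLE hpL) q hqL, ?_⟩
    show TP Ts (p + q) x = x
    rw [tp_add' Ts hTcont hTact, hqfix, hpfix]
  obtain ⟨m, hmA, hmidem⟩ :=
    exists_idempotent_in_compact_add_subsemigroup Ultrafilter.continuous_add_left
      A hAne hAcompact hAadd
  exact ⟨m, hmA.1, hmidem, hmA.2⟩

end NearIdem
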